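/- Let 0 < q < 1 and let f be a continuous function on [a, b]. Then lim_{q→1⁻} ∫_a^b f(t) d_q t = ∫_a^b f(t) dt, where ∫_a^b f(t) d_q t = Σ_{i=0}^{∞} f(a + q^i(b-a))(q^i - q^{i+1})(b-a) is Jackson's q-integral and the right-hand side is the Riemann integral. -/

import Mathlib

open Set intervalIntegral

theorem stmt_17 (a b : ℝ) (hab : a < b) (f : ℝ → ℂ) (hf : ContinuousOn f (Icc a b)) :
    Filter.Tendsto
      (fun q : ℝ => ∑' i : ℕ, f (a + q ^ i * (b - a)) * ((q ^ i - q ^ (i + 1)) * (b - a)))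
      (nhdsWithin 1 (Ioo (0 : ℝ) 1))
      (nhds (∫ t in a..b, f t)) := by
  have hba : (0:ℝ) < b - a := by linarith
  obtain ⟨M, hM⟩ := isCompact_Icc.exists_bound_of_continuousOn hf
  have hM0 : 0 ≤ M := le_trans (norm_nonneg _) (hM a ⟨le_refl _, le_of_lt hab⟩)
  rw [Metric.tendsto_nhdsWithin_nhds]
  intro ε hε
  set ε₀ := ε / (2 * (b - a)) with hε₀def
  have hε₀ : 0 < ε₀ := by positivity
  obtain ⟨δ', hδ', hUC⟩ := Metric.uniformContinuousOn_iff.mp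
    (isCompact_Icc.uniformContinuousOn_of_continuous hf) ε₀ hε₀
  refine ⟨δ' / (b - a), by positivity, ?_⟩
  intro q hq hdist
  obtain ⟨hq0, hq1⟩ := hq
  have hq0' : (0:ℝ) ≤ q := le_of_lt hq0
  have h1q : 0 < 1 - q := by linarith
  set x : ℕ → ℝ := fun i => a + q ^ i * (b - a) with hxdef
  have hxi_pow : ∀ i : ℕ, 0 < q ^ i := fun i => pow_pos hq0 i
  have hxi_pow1 : ∀ i : ℕ, q ^ i ≤ 1 := fun i => pow_le_one₀ hq0' (le_of_lt hq1)
  have hmem : ∀ i, x i ∈ Icc a b := by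
    intro i
    constructor
    · have := mul_pos (hxi_pow i) hba; simp only [hxdef]; linarith
    · have : q ^ i * (b - a) ≤ 1 * (b - a) :=
        mul_le_mul_of_nonneg_right (hxi_pow1 i) (le_of_lt hba)
      simp only [hxdef]; linarith
  have hstep : ∀ i, x i - x (i + 1) = q ^ i * ((1 - q) * (b - a)) := by
    intro i; simp only [hxdef, pow_succ]; ring
  have hstep_pos : ∀ i, 0 < x i - x (i + 1) := by
    intro i; rw [hstep]; positivity
  have hle : ∀ i, x (i + 1) ≤ x i := fun i => by linarith [hstep_pos i]
  -- mesh bound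
  have hmesh : ∀ i, x i - x (i + 1) < δ' := by
    intro i
    rw [hstep]
    have h1 : dist q 1 = 1 - q := by
      rw [Real.dist_eq, abs_of_nonpos (by linarith)]; ring
    have h2 : (1 - q) * (b - a) < δ' := by
      have := hdist
      rw [h1] at this
      calc (1 - q) * (b - a) < (δ' / (b - a)) * (b - a) :=
            mul_lt_mul_of_pos_right this hba
        _ = δ' := by field_simp
    calc q ^ i * ((1 - q) * (b - a)) ≤ 1 * ((1 - q) * (b - a)) :=
          mul_le_mul_of_nonneg_right (hxi_pow1 i) (by positivity)
      _ = (1 - q) * (b - a) := one_mul _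
      _ < δ' := h2
  -- integrability on subintervals
  have hint : ∀ (u v : ℝ), u ∈ Icc a b → v ∈ Icc a b → IntervalIntegrable f MeasureTheory.volume u v := by
    intro u v hu hv
    exact (hf.mono (uIcc_subset_Icc hu hv)).intervalIntegrable
  set F : ℕ → ℂ := fun i => ∫ t in x (i + 1)..x i, f t with hFdef
  set G : ℕ → ℂ := fun i => f (x i) * ((q ^ i - q ^ (i + 1)) * (b - a)) with hGdef
  have hGF : ∀ i, G i = ((x i - x (i + 1)) : ℝ) • f (x i) := by
    intro i
    simp only [hGdef, hxdef, Complex.real_smul]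
    push_cast
    ring
  -- geometric summable bound
  have hgeo : Summable (fun i : ℕ => q ^ i * ((1 - q) * (b - a))) :=
    (summable_geometric_of_lt_one hq0' hq1).mul_right _
  -- term estimate
  have hterm : ∀ i, ‖G i - F i‖ ≤ ε₀ * (q ^ i * ((1 - q) * (b - a))) := by
    intro i
    have hconst : G i = ∫ _t in x (i + 1)..x i, f (x i) := by
      rw [intervalIntegral.integral_const, hGF]
    have hdiff : G i - F i = ∫ t in x (i + 1)..x i, (f (x i) - f t) := by
      rw [hconst, hFdef]
      rw [intervalIntegral.integral_sub intervalIntegrable_const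
        (hint _ _ (hmem (i + 1)) (hmem i))]
    rw [hdiff]
    have hb1 : ∀ t ∈ Set.uIoc (x (i + 1)) (x i), ‖f (x i) - f t‖ ≤ ε₀ := by
      intro t ht
      rw [uIoc_of_le (hle i)] at ht
      have hta : a ≤ t := le_trans (hmem (i + 1)).1 (le_of_lt ht.1)
      have htb : t ≤ b := le_trans ht.2 (hmem i).2
      have hdq : dist (x i) t < δ' := by
        rw [Real.dist_eq, abs_of_nonneg (by linarith [ht.2])]
        calc x i - t < x i - x (i + 1) := by linarith [ht.1]
          _ < δ' := hmesh i
      have := hUC (x i) (hmem i) t ⟨hta, htb⟩ hdq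
      rw [dist_eq_norm] at this
      exact le_of_lt this
    calc ‖∫ t in x (i + 1)..x i, (f (x i) - f t)‖
        ≤ ε₀ * |x i - x (i + 1)| :=
          intervalIntegral.norm_integral_le_of_norm_le_const hb1
      _ = ε₀ * (q ^ i * ((1 - q) * (b - a))) := by
          rw [abs_of_nonneg (le_of_lt (hstep_pos i)), hstep]
  -- summability of G and F
  have hGsum : Summable G := by
    apply Summable.of_norm_bounded (g := fun i => M * (q ^ i * ((1 - q) * (b - a)))) (hgeo.mul_left M)
    intro i
    rw [hGF i, norm_smul, Real.norm_eq_abs, abs_of_nonneg (le_of_lt (hstep_pos i)), hstep,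
      mul_comm]
    exact mul_le_mul_of_nonneg_right (hM _ (hmem i)) (by positivity)
  have hFsum : Summable F := by
    apply Summable.of_norm_bounded (g := fun i => M * (q ^ i * ((1 - q) * (b - a)))) (hgeo.mul_left M)
    intro i
    have : ∀ t ∈ Set.uIoc (x (i + 1)) (x i), ‖f t‖ ≤ M := by
      intro t ht
      rw [uIoc_of_le (hle i)] at ht
      exact hM t ⟨le_trans (hmem (i + 1)).1 (le_of_lt ht.1), le_trans ht.2 (hmem i).2⟩
    calc ‖F i‖ ≤ M * |x i - x (i + 1)| :=
          intervalIntegral.norm_integral_le_of_norm_le_const this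
      _ = M * (q ^ i * ((1 - q) * (b - a))) := by
          rw [abs_of_nonneg (le_of_lt (hstep_pos i)), hstep]
  -- the sum of F equals the integral
  have hFtsum : ∑' i, F i = ∫ t in a..b, f t := by
    have hpart : ∀ n, ∑ i ∈ Finset.range n, F i = ∫ t in x n..b, f t := by
      intro n
      have h1 := intervalIntegral.sum_integral_adjacent_intervals
        (μ := MeasureTheory.volume) (f := f) (a := x) (n := n)
        (fun k _ => hint _ _ (hmem k) (hmem (k + 1)))
      have hx0 : x 0 = b := by simp [hxdef]
      rw [hx0] at h1
      calc ∑ i ∈ Finset.range n, F i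
          = ∑ i ∈ Finset.range n, -(∫ t in x i..x (i + 1), f t) := by
            apply Finset.sum_congr rfl
            intro i _
            exact intervalIntegral.integral_symm _ _
        _ = -(∫ t in b..x n, f t) := by rw [Finset.sum_neg_distrib, h1]
        _ = ∫ t in x n..b, f t := (intervalIntegral.integral_symm _ _).symm
    have hsplit : ∀ n, ∫ t in x n..b, f t = (∫ t in a..b, f t) - ∫ t in a..x n, f t := by
      intro n
      have := intervalIntegral.integral_add_adjacent_intervals
        (hint a (x n) (left_mem_Icc.mpr (le_of_lt hab)) (hmem n))
        (hint (x n) b (hmem n) (right_mem_Icc.mpr (le_of_lt hab)))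
      linear_combination this
    have htail : Filter.Tendsto (fun n => ∫ t in a..x n, f t) Filter.atTop (nhds 0) := by
      have hb : ∀ n, ‖∫ t in a..x n, f t‖ ≤ M * (b - a) * q ^ n := by
        intro n
        have hnorm : ∀ t ∈ Set.uIoc a (x n), ‖f t‖ ≤ M := by
          intro t ht
          rw [uIoc_of_le (hmem n).1] at ht
          exact hM t ⟨le_of_lt ht.1, le_trans ht.2 (hmem n).2⟩
        calc ‖∫ t in a..x n, f t‖ ≤ M * |x n - a| :=
              intervalIntegral.norm_integral_le_of_norm_le_const hnorm
          _ = M * (b - a) * q ^ n := by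
              have : x n - a = q ^ n * (b - a) := by simp [hxdef]
              rw [this, abs_of_nonneg (by positivity)]; ring
      have hlim : Filter.Tendsto (fun n : ℕ => M * (b - a) * q ^ n) Filter.atTop (nhds 0) := by
        have := (tendsto_pow_atTop_nhds_zero_of_lt_one hq0' hq1).const_mul (M * (b - a))
        simpa using this
      rw [tendsto_zero_iff_norm_tendsto_zero]
      exact squeeze_zero (fun n => norm_nonneg _) hb hlim
    have hlim2 : Filter.Tendsto (fun n => ∑ i ∈ Finset.range n, F i) Filter.atTop
        (nhds (∫ t in a..b, f t)) := by
      simp only [hpart, hsplit]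
      simpa using (tendsto_const_nhds (x := ∫ t in a..b, f t)).sub htail
    exact tendsto_nhds_unique hFsum.hasSum.tendsto_sum_nat hlim2
  -- final estimate
  have key : dist (∑' i, G i) (∫ t in a..b, f t) ≤ ε₀ * (b - a) := by
    rw [dist_eq_norm, ← hFtsum, ← Summable.tsum_sub hGsum hFsum]
    have hnormsum : Summable (fun i => ‖G i - F i‖) :=
      Summable.of_nonneg_of_le (fun i => norm_nonneg _) hterm (hgeo.mul_left ε₀)
    calc ‖∑' i, (G i - F i)‖ ≤ ∑' i, ‖G i - F i‖ := norm_tsum_le_tsum_norm hnormsum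
      _ ≤ ∑' i : ℕ, ε₀ * (q ^ i * ((1 - q) * (b - a))) :=
          Summable.tsum_le_tsum hterm hnormsum (hgeo.mul_left ε₀)
      _ = ε₀ * ((1 - q) * (b - a)) * ∑' i : ℕ, q ^ i := by
          rw [← tsum_mul_left]
          congr 1; ext i; ring
      _ = ε₀ * (b - a) := by
          rw [tsum_geometric_of_lt_one hq0' hq1]
          field_simp
    
  have : ε₀ * (b - a) < ε := by
    rw [hε₀def]
    rw [div_mul_eq_mul_div, div_lt_iff₀ (by positivity)]
    nlinarith
  exact lt_of_le_of_lt key this
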